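/- arXiv:1410.5351 — 6 statements merged into one kernel-verified Lean document; each statement's English description precedes it below -/
import Mathlib

section
/- If S is a finitely generated residually finite semigroup, then every surjective semigroup endomorphism of S is injective (i.e., S is Hopfian). -/
/-- A semigroup `S` is residually finite if any two distinct elements can be
separated by a semigroup homomorphism into a finite semigroup. -/
def SemigroupResiduallyFinite (S : Type) [Semigroup S] : Prop :=
  ∀ s1 s2 : S, s1 ≠ s2 → ∃ (T : Type) (mT : Semigroup T), Finite T ∧
    ∃ ρ : S → T, (∀ a b : S, ρ (a * b) = mT.mul (ρ a) (ρ b)) ∧ ρ s1 ≠ ρ s2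

/-- Homs from a f.g. semigroup to a finite semigroup form a finite type. -/
theorem hom_finite_aux {S T : Type} [Semigroup S] [Semigroup T] [Finite T]
    (F : Finset S) (hF : Subsemigroup.closure (F : Set S) = ⊤) :
    Finite (S →ₙ* T) := by
  have hinj : Function.Injective (fun φ : S →ₙ* T => fun x : F => φ x.1) := by
    intro φ₁ φ₂ h
    ext s
    have hs : s ∈ Subsemigroup.closure (F : Set S) := hF ▸ Subsemigroup.mem_top s
    induction hs using Subsemigroup.closure_induction with
    | mem x hx => exact congrFun h ⟨x, hx⟩
    | mul a b _ _ ha hb => simp [map_mul, ha, hb]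
  exact Finite.of_injective _ hinj

/-- Every finitely generated residually finite semigroup is Hopfian. -/
theorem stmt_0 (S : Type) [Semigroup S]
    (hfg : ∃ F : Finset S, Subsemigroup.closure (F : Set S) = ⊤)
    (hrf : SemigroupResiduallyFinite S)
    (ψ : S →ₙ* S) (hsurj : Function.Surjective ψ) :
    Function.Injective ψ := by
  intro a b hab
  by_contra hne
  obtain ⟨T, mT, hT, ρ, hρ, hsep⟩ := hrf a b hne
  letI := mT
  let ρ' : S →ₙ* T := ⟨ρ, fun x y => hρ x y⟩
  obtain ⟨F, hF⟩ := hfg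
  haveI : Finite (S →ₙ* T) := hom_finite_aux F hF
  have hinj : Function.Injective (fun φ : S →ₙ* T => φ.comp ψ) := by
    intro φ₁ φ₂ h
    ext s
    obtain ⟨x, rfl⟩ := hsurj s
    exact congrArg (fun f : S →ₙ* T => f x) h
  obtain ⟨φ, hφ⟩ := (Finite.injective_iff_surjective.mp hinj) ρ'
  apply hsep
  have ha : ρ a = φ (ψ a) := (congrArg (fun f : S →ₙ* T => f a) hφ).symm
  have hb : ρ b = φ (ψ b) := (congrArg (fun f : S →ₙ* T => f b) hφ).symm
  rw [ha, hb, hab]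
end

section
/- If S is a finitely generated residually finite semigroup, then the monoid End(S) of semigroup endomorphisms of S (under composition) is residually finite. -/
/-- If `S` is a finitely generated residually finite semigroup, then the monoid
`End(S)` of semigroup endomorphisms of `S` (under composition, with identity the
identity endomorphism) is residually finite: any two distinct endomorphisms can
be separated by a monoid homomorphism into a finite monoid. -/
theorem stmt_3 (S : Type) [Semigroup S]
    (hfg : ∃ F : Finset S, Subsemigroup.closure (F : Set S) = ⊤)
    (hrf : SemigroupResiduallyFinite S)
    (α1 α2 : S →ₙ* S) (hne : α1 ≠ α2) :
    ∃ (N : Type) (mN : Monoid N), Finite N ∧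
      ∃ Φ : (S →ₙ* S) → N,
        Φ (MulHom.id S) = mN.one ∧
        (∀ f g : S →ₙ* S, Φ (f.comp g) = mN.mul (Φ f) (Φ g)) ∧
        Φ α1 ≠ Φ α2 := by
  obtain ⟨s, hs⟩ : ∃ s, α1 s ≠ α2 s := by
    by_contra h
    push_neg at h
    exact hne (MulHom.ext h)
  obtain ⟨T, mT, hT, ρ, hρ, hsep⟩ := hrf (α1 s) (α2 s) hs
  obtain ⟨F, hF⟩ := hfg
  letI := mT
  let ρ' : S →ₙ* T := ⟨ρ, fun a b => hρ a b⟩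
  -- Hom(S, T) is finite since S is finitely generated and T is finite
  haveI : Finite (S →ₙ* T) := by
    have hinj : Function.Injective (fun (φ : S →ₙ* T) => (fun x : F => φ x.1)) := by
      intro φ ψ h
      ext x
      have : ∀ y ∈ Subsemigroup.closure (F : Set S), φ y = ψ y := by
        intro y hy
        induction hy using Subsemigroup.closure_induction with
        | mem z hz => exact congrFun h ⟨z, hz⟩
        | mul a b _ _ ha hb => simp [map_mul, ha, hb]
      exact this x (by rw [hF]; trivial)
    exact Finite.of_injective _ hinj
  refine ⟨(S →ₙ* T) → (S →ₙ* T),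
    { one := id, mul := fun a b => b ∘ a,
      mul_assoc := fun _ _ _ => rfl,
      one_mul := fun _ => rfl,
      mul_one := fun _ => rfl }, Pi.finite,
    fun f => fun φ => φ.comp f, ?_, ?_, ?_⟩
  · funext φ; exact MulHom.comp_id φ
  · intro f g
    funext φ
    rfl
  · intro h
    have := congrFun h ρ'
    have := congrArg (fun ψ : S →ₙ* T => ψ s) this
    exact hsep this
end

section
/- Let M be a monoid and A a finite set with more than one element. If M is residually finite, then the monoid CA(M, A) of cellular automata over M with alphabet A is residually finite. -/
def shift {M A : Type} [Monoid M] (m : M) (x : M → A) : M → A :=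
  fun m' => x (m' * m)

/-- A cellular automaton over `M` and `A`: a continuous (for the prodiscrete
topology), shift-equivariant self-map of `A^M`. -/
def IsCellularAutomaton {M A : Type} [Monoid M] [TopologicalSpace A]
    [DiscreteTopology A] (τ : (M → A) → (M → A)) : Prop :=
  Continuous τ ∧ ∀ (m : M) (x : M → A), τ (shift m x) = shift m (τ x)

/-- `CA(M,A)`: the monoid of cellular automata, as a submonoid of the monoid of
all self-maps of `A^M` under composition. -/
def CAMonoid (M A : Type) [Monoid M] [TopologicalSpace A] [DiscreteTopology A] :
    Submonoid (Function.End (M → A)) where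
  carrier := {τ | IsCellularAutomaton τ}
  one_mem' := ⟨continuous_id, fun _ _ => rfl⟩
  mul_mem' := fun {a b} ha hb =>
    ⟨ha.1.comp hb.1, fun m x => by
      show a (b (shift m x)) = shift m (a (b x))
      rw [hb.2, ha.2]⟩

/-- A monoid `M` is residually finite if any two distinct elements can be
separated by a monoid homomorphism into a finite monoid. -/
def MonoidResiduallyFinite (M : Type) [Monoid M] : Prop :=
  ∀ m1 m2 : M, m1 ≠ m2 → ∃ (N : Type) (mN : Monoid N), Finite N ∧
    ∃ ρ : M → N, ρ 1 = mN.one ∧ (∀ a b : M, ρ (a * b) = mN.mul (ρ a) (ρ b)) ∧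
      ρ m1 ≠ ρ m2

lemma exists_memory {M A : Type} [Finite A] [TopologicalSpace A] [DiscreteTopology A]
    (f : (M → A) → A) (hf : Continuous f) :
    ∃ S : Finset M, ∀ x y : M → A, (∀ s ∈ S, x s = y s) → f x = f y := by
  classical
  have key : ∀ x : M → A, ∃ I : Finset M,
      {y : M → A | ∀ i ∈ I, y i = x i} ⊆ {y | f y = f x} := by
    intro x
    have hopen : IsOpen {y : M → A | f y = f x} := by
      have h0 : {y : M → A | f y = f x} = f ⁻¹' {f x} := rfl
      rw [h0]; exact (isOpen_discrete _).preimage hf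
    obtain ⟨I, u, hu, hsub⟩ := isOpen_pi_iff.mp hopen x rfl
    refine ⟨I, fun y hy => hsub (Set.mem_pi.mpr fun i hi => ?_)⟩
    rw [hy i hi]
    exact (hu i hi).2
  choose I hI using key
  have hopenU : ∀ x : M → A, IsOpen {y : M → A | ∀ i ∈ I x, y i = x i} := by
    intro x
    have h0 : {y : M → A | ∀ i ∈ I x, y i = x i}
        = Set.pi ↑(I x) (fun i => ({x i} : Set A)) := by
      ext y; simp [Set.mem_pi]
    rw [h0]
    exact isOpen_set_pi (I x).finite_toSet (fun i _ => isOpen_discrete _)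
  have hcov : (Set.univ : Set (M → A)) ⊆
      ⋃ x : M → A, {y : M → A | ∀ i ∈ I x, y i = x i} :=
    fun x _ => Set.mem_iUnion.mpr ⟨x, fun i _ => rfl⟩
  obtain ⟨t, ht⟩ := isCompact_univ.elim_finite_subcover _ hopenU hcov
  refine ⟨t.sup I, fun x y hxy => ?_⟩
  obtain ⟨x0, hx0t, hx0⟩ := Set.mem_iUnion₂.mp (ht (Set.mem_univ x))
  have hmem : ∀ i ∈ I x0, i ∈ t.sup I := fun i hi =>
    Finset.mem_of_subset (Finset.le_sup (f := I) hx0t) hi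
  have hx : f x = f x0 := hI x0 (show x ∈ {y : M → A | ∀ i ∈ I x0, y i = x0 i} from hx0)
  have hy : f y = f x0 := hI x0
    (show y ∈ {y : M → A | ∀ i ∈ I x0, y i = x0 i} from
      fun i hi => by rw [← hxy i (hmem i hi)]; exact hx0 i hi)
  rw [hx, hy]

/-- Joint separation on a finite set. -/
lemma exists_quotient {M : Type} [Monoid M]
    (hrf : ∀ m1 m2 : M, m1 ≠ m2 → ∃ (N : Type) (mN : Monoid N), Finite N ∧
      ∃ ρ : M → N, ρ 1 = mN.one ∧ (∀ a b : M, ρ (a * b) = mN.mul (ρ a) (ρ b)) ∧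
        ρ m1 ≠ ρ m2) (S : Finset M) :
    ∃ (N : Type) (mN : Monoid N), Finite N ∧ ∃ ρ : M → N,
      ρ 1 = mN.one ∧ (∀ a b : M, ρ (a * b) = mN.mul (ρ a) (ρ b)) ∧
      ∀ s ∈ S, ∀ u ∈ S, ρ s = ρ u → s = u := by
  classical
  let T := {p : M × M // p.1 ∈ S ∧ p.2 ∈ S ∧ p.1 ≠ p.2}
  haveI : Finite T := by
    apply Finite.of_injective
      (fun t : T => ((⟨t.1.1, t.2.1⟩ : S), (⟨t.1.2, t.2.2.1⟩ : S)))
    intro a b h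
    apply Subtype.ext
    have h1 : a.1.1 = b.1.1 := congrArg (fun p => (p.1 : M)) h
    have h2 : a.1.2 = b.1.2 := congrArg (fun p => (p.2 : M)) h
    exact Prod.ext h1 h2
  choose N mN hfin ρ h1 hmul hne using fun t : T => hrf t.1.1 t.1.2 t.2.2.2
  letI := mN
  haveI := hfin
  refine ⟨∀ t : T, N t, inferInstance, inferInstance, fun m t => ρ t m, ?_, ?_, ?_⟩
  · funext t; exact h1 t
  · intro a b; funext t; exact hmul t a b
  · intro s hs u hu h
    by_contra hne'
    exact hne ⟨(s, u), hs, hu, hne'⟩ (congrFun h ⟨(s, u), hs, hu, hne'⟩)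

lemma ca_apply_eq {M A : Type} [Monoid M] [TopologicalSpace A] [DiscreteTopology A]
    {τ : (M → A) → (M → A)} (hτ : IsCellularAutomaton τ) (x : M → A) (m : M) :
    τ x m = τ (shift m x) 1 := by
  rw [hτ.2]
  show τ x m = τ x (1 * m)
  rw [one_mul]

lemma ca_periodic {M A : Type} [Monoid M] [TopologicalSpace A] [DiscreteTopology A]
    {τ : (M → A) → (M → A)} (hτ : IsCellularAutomaton τ)
    {N : Type} (mN : Monoid N) (ρ : M → N)
    (hmul : ∀ a b : M, ρ (a * b) = mN.mul (ρ a) (ρ b))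
    (y : N → A) {m m' : M} (h : ρ m = ρ m') :
    τ (y ∘ ρ) m = τ (y ∘ ρ) m' := by
  rw [ca_apply_eq hτ _ m, ca_apply_eq hτ _ m']
  congr 1
  funext n
  show y (ρ (n * m)) = y (ρ (n * m'))
  rw [hmul, hmul, h]

/-- If `M` is a residually finite monoid and `A` a finite alphabet with more than
one element, then the monoid `CA(M,A)` is residually finite. -/
theorem stmt_16 (M A : Type) [Monoid M] [Finite A] [Nontrivial A]
    [TopologicalSpace A] [DiscreteTopology A]
    (hrf : MonoidResiduallyFinite M) :
    ∀ τ1 τ2 : CAMonoid M A, τ1 ≠ τ2 →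
      ∃ (N : Type) (mN : Monoid N), Finite N ∧
        ∃ Φ : CAMonoid M A → N, Φ 1 = mN.one ∧
          (∀ a b : CAMonoid M A, Φ (a * b) = mN.mul (Φ a) (Φ b)) ∧
          Φ τ1 ≠ Φ τ2 := by
  classical
  intro τ1 τ2 hτne
  -- separate the two CA on some configuration and point
  have hsep : ∃ (x : M → A) (m : M),
      (τ1 : Function.End (M → A)) x m ≠ (τ2 : Function.End (M → A)) x m := by
    by_contra h
    push_neg at h
    exact hτne (Subtype.ext (funext fun x => funext fun m => h x m))
  obtain ⟨x, m0, hxm⟩ := hsep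
  set x' : M → A := shift m0 x with hx'def
  have hx'1 : ∀ τ : CAMonoid M A,
      (τ : Function.End (M → A)) x' 1 = (τ : Function.End (M → A)) x m0 :=
    fun τ => (ca_apply_eq τ.2 x m0).symm
  -- memory sets
  obtain ⟨S1, hS1⟩ := exists_memory (fun z => (τ1 : Function.End (M → A)) z 1)
    ((continuous_apply (1 : M)).comp τ1.2.1)
  obtain ⟨S2, hS2⟩ := exists_memory (fun z => (τ2 : Function.End (M → A)) z 1)
    ((continuous_apply (1 : M)).comp τ2.2.1)
  set S : Finset M := S1 ∪ S2 with hSdef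
  obtain ⟨N, mN, hNfin, ρ, hρ1, hρmul, hρinj⟩ := exists_quotient hrf S
  haveI := hNfin
  -- the separating configuration, ρ-periodic, agreeing with x' on S
  have : Nonempty A := inferInstance
  set y : N → A := fun n => if h : ∃ s, s ∈ S ∧ ρ s = n then x' h.choose
    else Classical.arbitrary A with hydef
  have hyρ : ∀ s ∈ S, y (ρ s) = x' s := by
    intro s hs
    have hex : ∃ s', s' ∈ S ∧ ρ s' = ρ s := ⟨s, hs, rfl⟩
    have h1 : y (ρ s) = x' hex.choose := by rw [hydef]; exact dif_pos hex
    have h2 : hex.choose = s := hρinj _ hex.choose_spec.1 _ hs hex.choose_spec.2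
    rw [h1, h2]
  -- the homomorphism into End (N → A)
  set Φ : CAMonoid M A → Function.End (N → A) := fun τ => fun y' n =>
    if h : ∃ m, ρ m = n then (τ : Function.End (M → A)) (y' ∘ ρ) h.choose
    else y' n with hΦdef
  have hΦρ : ∀ (τ : CAMonoid M A) (y' : N → A),
      (Φ τ y') ∘ ρ = (τ : Function.End (M → A)) (y' ∘ ρ) := by
    intro τ y'
    funext m
    have hex : ∃ m', ρ m' = ρ m := ⟨m, rfl⟩
    show Φ τ y' (ρ m) = _
    have h1 : Φ τ y' (ρ m)
        = (τ : Function.End (M → A)) (y' ∘ ρ) hex.choose := by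
      rw [hΦdef]; exact dif_pos hex
    rw [h1]
    exact ca_periodic τ.2 mN ρ hρmul y' hex.choose_spec
  refine ⟨Function.End (N → A), inferInstance,
    (inferInstance : Finite ((N → A) → (N → A))), Φ, ?_, ?_, ?_⟩
  · -- Φ 1 = id
    funext y' n
    show (if h : ∃ m, ρ m = n then
        ((1 : CAMonoid M A) : Function.End (M → A)) (y' ∘ ρ) h.choose else y' n) = y' n
    split
    · next h => show y' (ρ h.choose) = y' n; rw [h.choose_spec]
    · rfl
  · -- multiplicative
    intro a b
    funext y' n
    show (if h : ∃ m, ρ m = n then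
        ((a * b : CAMonoid M A) : Function.End (M → A)) (y' ∘ ρ) h.choose else y' n)
      = Φ a (Φ b y') n
    by_cases h : ∃ m, ρ m = n
    · rw [dif_pos h]
      have h2 : Φ a (Φ b y') n
          = (a : Function.End (M → A)) ((Φ b y') ∘ ρ) h.choose := by
        rw [hΦdef]; exact dif_pos h
      rw [h2, hΦρ b y']
      rfl
    · rw [dif_neg h]
      have h2 : Φ a (Φ b y') n = Φ b y' n := by rw [hΦdef]; exact dif_neg h
      have h3 : Φ b y' n = y' n := by rw [hΦdef]; exact dif_neg h
      rw [h2, h3]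
  · -- separation
    intro h
    apply hxm
    have key : ∀ τ : CAMonoid M A, (∀ s ∈ S, ∀ z : M → A,
        (∀ s' ∈ S, z s' = x' s') → True) → True := fun _ _ => trivial
    have hagree : ∀ s ∈ S, (y ∘ ρ) s = x' s := fun s hs => hyρ s hs
    have e : ∀ τ : CAMonoid M A, Φ τ y (ρ 1) = (τ : Function.End (M → A)) (y ∘ ρ) 1 :=
      fun τ => congrFun (hΦρ τ y) 1
    have e1 : (τ1 : Function.End (M → A)) (y ∘ ρ) 1
        = (τ1 : Function.End (M → A)) x' 1 :=
      hS1 (y ∘ ρ) x' (fun s hs => hagree s (Finset.mem_union_left _ hs))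
    have e2 : (τ2 : Function.End (M → A)) (y ∘ ρ) 1
        = (τ2 : Function.End (M → A)) x' 1 :=
      hS2 (y ∘ ρ) x' (fun s hs => hagree s (Finset.mem_union_right _ hs))
    have hΦeq : Φ τ1 y (ρ 1) = Φ τ2 y (ρ 1) := by rw [h]
    rw [e τ1, e τ2, e1, e2, hx'1 τ1, hx'1 τ2] at hΦeq
    exact hΦeq
end

section
/- Let M be a monoid and A a finite set with more than one element. If the monoid CA(M, A) is residually finite, then M is residually finite. -/
def lshift {M A : Type} [Monoid M] [TopologicalSpace A] [DiscreteTopology A]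
    (m : M) : CAMonoid M A :=
  ⟨fun x m' => x (m * m'),
    continuous_pi fun m' => continuous_apply (m * m'),
    fun n x => by funext m'; simp [shift, mul_assoc]⟩

/-- If the monoid `CA(M,A)` is residually finite (`A` a finite alphabet with
more than one element), then `M` is residually finite. -/
theorem stmt_17 (M A : Type) [Monoid M] [Finite A] [Nontrivial A]
    [TopologicalSpace A] [DiscreteTopology A]
    (hca : ∀ τ1 τ2 : CAMonoid M A, τ1 ≠ τ2 →
      ∃ (N : Type) (mN : Monoid N), Finite N ∧
        ∃ Φ : CAMonoid M A → N, Φ 1 = mN.one ∧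
          (∀ a b : CAMonoid M A, Φ (a * b) = mN.mul (Φ a) (Φ b)) ∧
          Φ τ1 ≠ Φ τ2) :
    MonoidResiduallyFinite M := by
  classical
  intro m1 m2 hne
  obtain ⟨a, b, hab⟩ := exists_pair_ne A
  have hsig : lshift (A := A) m1 ≠ lshift m2 := by
    intro h
    have := congrFun (congrFun (congrArg Subtype.val h)
      (fun m => if m = m1 then a else b)) 1
    simp only [lshift, mul_one] at this
    rw [if_pos trivial, if_neg (Ne.symm hne)] at this
    exact hab this
  obtain ⟨N, mN, hfin, Φ, hone, hmul, hsep⟩ := hca _ _ hsig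
  letI : Monoid N := mN
  refine ⟨Nᵐᵒᵖ, inferInstance, Finite.of_equiv N MulOpposite.opEquiv,
    fun m => MulOpposite.op (Φ (lshift m)), ?_, ?_, ?_⟩
  · have h1 : lshift (A := A) (1 : M) = 1 := by
      apply Subtype.ext; funext x m'; simp [lshift]; rfl
    show MulOpposite.op (Φ (lshift 1)) = _
    rw [h1, hone]; rfl
  · intro x y
    have h2 : lshift (A := A) (x * y) = lshift y * lshift x := by
      apply Subtype.ext; funext z m'
      show z (x * y * m') = (lshift (A := A) y).val ((lshift (A := A) x).val z) m'
      simp [lshift, mul_assoc]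
    show MulOpposite.op (Φ (lshift (x * y))) = _
    rw [h2, hmul]; rfl
  · intro h
    exact hsep (MulOpposite.op_injective h)
end

section
/- Let M be a monoid and A a finite set with more than one element. If M is residually finite then for any two distinct continuous maps f, g : A^M → A^M there exists a periodic configuration x ∈ A^M with f(x) ≠ g(x). -/
/-- If `M` is residually finite and `A` is a finite set with more than one
element, then any two distinct continuous self-maps of `A^M` (prodiscrete
topology) differ at some periodic configuration. -/
theorem stmt_18 (M A : Type) [Monoid M] [Finite A] [Nontrivial A]
    [TopologicalSpace A] [DiscreteTopology A]
    (hrf : MonoidResiduallyFinite M)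
    (f g : (M → A) → (M → A)) (hf : Continuous f) (hg : Continuous g)
    (hfg : f ≠ g) :
    ∃ x : M → A, (Set.range fun m : M => shift m x).Finite ∧ f x ≠ g x := by
  classical
  rw [Function.ne_iff] at hfg
  obtain ⟨x0, hx0⟩ := hfg
  rw [Function.ne_iff] at hx0
  obtain ⟨m0, hm0⟩ := hx0
  have hU : {x : M → A | f x m0 = f x0 m0 ∧ g x m0 = g x0 m0} ∈ nhds x0 := by
    apply Filter.inter_mem
    · have h1 : (fun x : M → A => f x m0) ⁻¹' {f x0 m0} ∈ nhds x0 :=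
        ((continuous_apply m0).comp hf).continuousAt.preimage_mem_nhds
          (by rw [nhds_discrete]; exact Filter.mem_pure.2 rfl)
      exact h1
    · have h1 : (fun x : M → A => g x m0) ⁻¹' {g x0 m0} ∈ nhds x0 :=
        ((continuous_apply m0).comp hg).continuousAt.preimage_mem_nhds
          (by rw [nhds_discrete]; exact Filter.mem_pure.2 rfl)
      exact h1
  rw [nhds_pi, Filter.mem_pi] at hU
  obtain ⟨I, hI, V, hV, hIV⟩ := hU
  have hkey : ∀ y : M → A, (∀ m ∈ I, y m = x0 m) →
      f y m0 = f x0 m0 ∧ g y m0 = g x0 m0 := by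
    intro y hy
    apply hIV
    intro m hm
    rw [hy m hm]
    have := hV m
    rw [nhds_discrete, Filter.mem_pure] at this
    exact this
  -- index type of pairs to separate
  let ι := {p : M × M // p.1 ∈ I ∧ p.2 ∈ I ∧ p.1 ≠ p.2}
  haveI : Finite ι := by
    have : {p : M × M | p.1 ∈ I ∧ p.2 ∈ I ∧ p.1 ≠ p.2}.Finite :=
      (hI.prod hI).subset (fun p hp => ⟨hp.1, hp.2.1⟩)
    exact this.to_subtype
  choose N mN hNfin ρ hρ1 hρmul hρne using fun i : ι => hrf i.1.1 i.1.2 i.2.2.2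
  letI instN : ∀ i : ι, Monoid (N i) := mN
  haveI : ∀ i : ι, Finite (N i) := hNfin
  let P := ∀ i : ι, N i
  let ρbar : M → P := fun m i => ρ i m
  have hρbar : ∀ a b : M, ρbar (a * b) = ρbar a * ρbar b := by
    intro a b
    funext i
    exact hρmul i a b
  have hinj : ∀ s ∈ I, ∀ t ∈ I, ρbar s = ρbar t → s = t := by
    intro s hs t ht hst
    by_contra hne
    exact hρne ⟨(s, t), hs, ht, hne⟩ (congrFun hst ⟨(s, t), hs, ht, hne⟩)
  let y : P → A := fun n =>
    if h : ∃ s, s ∈ I ∧ ρbar s = n then x0 h.choose else Classical.arbitrary A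
  let x : M → A := fun m => y (ρbar m)
  have hagree : ∀ s ∈ I, x s = x0 s := by
    intro s hs
    have h : ∃ s', s' ∈ I ∧ ρbar s' = ρbar s := ⟨s, hs, rfl⟩
    show y (ρbar s) = x0 s
    rw [show y (ρbar s) = x0 h.choose from dif_pos h]
    rw [hinj h.choose h.choose_spec.1 s hs h.choose_spec.2]
  refine ⟨x, ?_, ?_⟩
  · apply Set.Finite.subset (Set.finite_range fun n : P => fun m' => y (ρbar m' * n))
    rintro _ ⟨m, rfl⟩
    refine ⟨ρbar m, ?_⟩
    funext m'
    show y (ρbar m' * ρbar m) = x (m' * m)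
    rw [← hρbar]
  · intro hx
    have := hkey x hagree
    apply hm0
    rw [← this.1, ← this.2]
    rw [hx]
end

section
/- Let M be a monoid and A a finite set with more than one element. Then M is residually finite if and only if the set of periodic configurations in A^M is dense in A^M for the prodiscrete topology. -/
section Aux

variable {M : Type} [Monoid M]

/-- Separate one element from a finite set by a hom to a finite monoid. -/
lemma sep_finset (h : MonoidResiduallyFinite M) (a : M) (F : Finset M) :
    ∃ (N : Type) (mN : Monoid N), Finite N ∧
      ∃ ρ : M → N, ρ 1 = mN.one ∧ (∀ x y : M, ρ (x * y) = mN.mul (ρ x) (ρ y)) ∧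
        ∀ f ∈ F, f ≠ a → ρ f ≠ ρ a := by
  classical
  induction F using Finset.induction_on with
  | empty =>
      exact ⟨PUnit, inferInstance, inferInstance, fun _ => PUnit.unit, rfl,
        fun _ _ => rfl, by simp⟩
  | @insert b F hb ih =>
      obtain ⟨N₁, mN₁, fin₁, ρ₁, h11, h1m, h1s⟩ := ih
      by_cases hba : b = a
      · exact ⟨N₁, mN₁, fin₁, ρ₁, h11, h1m, by
          intro f hf hfa
          rcases Finset.mem_insert.mp hf with rfl | hf
          · exact absurd hba hfa
          · exact h1s f hf hfa⟩
      · obtain ⟨N₂, mN₂, fin₂, ρ₂, h21, h2m, h2s⟩ := h b a hba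
        letI := mN₁; letI := mN₂; letI := fin₁; letI := fin₂
        refine ⟨N₁ × N₂, inferInstance, inferInstance,
          fun m => (ρ₁ m, ρ₂ m), ?_, ?_, ?_⟩
        · rw [Prod.mk.injEq]; exact ⟨h11, h21⟩
        · intro x y; rw [Prod.mk.injEq]; exact ⟨h1m x y, h2m x y⟩
        · intro f hf hfa hcontr
          rcases Finset.mem_insert.mp hf with rfl | hf
          · exact h2s (congrArg Prod.snd hcontr)
          · exact h1s f hf hfa (congrArg Prod.fst hcontr)

/-- Injective-on-a-finite-set hom to a finite monoid. -/
lemma inj_finset (h : MonoidResiduallyFinite M) (F : Finset M) :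
    ∃ (N : Type) (mN : Monoid N), Finite N ∧
      ∃ ρ : M → N, ρ 1 = mN.one ∧ (∀ x y : M, ρ (x * y) = mN.mul (ρ x) (ρ y)) ∧
        Set.InjOn ρ F := by
  classical
  induction F using Finset.induction_on with
  | empty =>
      exact ⟨PUnit, inferInstance, inferInstance, fun _ => PUnit.unit, rfl,
        fun _ _ => rfl, by simp⟩
  | @insert a F ha ih =>
      obtain ⟨N₁, mN₁, fin₁, ρ₁, h11, h1m, h1s⟩ := ih
      obtain ⟨N₂, mN₂, fin₂, ρ₂, h21, h2m, h2s⟩ := sep_finset h a F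
      letI := mN₁; letI := mN₂; letI := fin₁; letI := fin₂
      refine ⟨N₁ × N₂, inferInstance, inferInstance,
        fun m => (ρ₁ m, ρ₂ m), ?_, ?_, ?_⟩
      · rw [Prod.mk.injEq]; exact ⟨h11, h21⟩
      · intro x y; rw [Prod.mk.injEq]; exact ⟨h1m x y, h2m x y⟩
      · intro x hx y hy hxy
        simp only [Finset.coe_insert, Set.mem_insert_iff, Finset.mem_coe] at hx hy
        rcases hx with rfl | hx <;> rcases hy with rfl | hy
        · rfl
        · by_contra hne
          exact h2s y hy (fun e => hne e.symm) (congrArg Prod.snd hxy.symm)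
        · by_contra hne
          exact h2s x hx hne (congrArg Prod.snd hxy)
        · exact h1s hx hy (congrArg Prod.fst hxy)

end Aux

/-- `M` is residually finite iff the periodic configurations (those with finite
shift orbit) are dense in `A^M` for the prodiscrete topology, where `A` is a
finite set with more than one element. -/
theorem stmt_19 (M A : Type) [Monoid M] [Finite A] [Nontrivial A]
    [TopologicalSpace A] [DiscreteTopology A] :
    MonoidResiduallyFinite M ↔
      Dense {x : M → A | (Set.range fun m : M => shift m x).Finite} := by
  classical
  constructor
  · -- forward: residually finite → dense
    intro h
    rw [dense_iff_inter_open]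
    rintro U hU ⟨x, hx⟩
    obtain ⟨I, u, hIu, hsub⟩ := isOpen_pi_iff.mp hU x hx
    obtain ⟨N, mN, finN, ρ, h1, hm, hinj⟩ := inj_finset h I
    haveI := finN
    obtain ⟨a0, -⟩ := exists_pair_ne A
    set g : N → A := fun n =>
      if h' : ∃ i ∈ I, ρ i = n then x h'.choose else a0 with hg
    set y : M → A := fun m => g (ρ m) with hy
    have hyI : ∀ i ∈ I, y i = x i := by
      intro i hi
      have hex : ∃ j ∈ I, ρ j = ρ i := ⟨i, hi, rfl⟩
      show (if h' : ∃ j ∈ I, ρ j = ρ i then x h'.choose else a0) = x i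
      rw [dif_pos hex]
      exact congrArg x (hinj hex.choose_spec.1 hi hex.choose_spec.2)
    refine ⟨y, hsub ?_, ?_⟩
    · intro i hi
      rw [hyI i hi]
      exact (hIu i hi).2
    · show (Set.range fun m : M => shift m y).Finite
      have hsubr : (Set.range fun m : M => shift m y) ⊆
          Set.range fun n : N => (fun k : M => g (mN.mul (ρ k) n)) := by
        rintro _ ⟨m, rfl⟩
        refine ⟨ρ m, ?_⟩
        funext k
        show g (mN.mul (ρ k) (ρ m)) = g (ρ (k * m))
        rw [hm]
      exact (Set.finite_range _).subset hsubr
  · -- backward: dense → residually finite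
    intro hdense m1 m2 hne
    obtain ⟨a, b, hab⟩ := exists_pair_ne A
    set x : M → A := fun m => if m = m1 then a else b with hx
    have hopen : IsOpen {z : M → A | z m1 = x m1 ∧ z m2 = x m2} := by
      have heq : {z : M → A | z m1 = x m1 ∧ z m2 = x m2} =
          (fun z : M → A => z m1) ⁻¹' {x m1} ∩ (fun z : M → A => z m2) ⁻¹' {x m2} := by
        ext z; simp [Set.mem_inter_iff]
      rw [heq]
      exact ((continuous_apply m1).isOpen_preimage _ (isOpen_discrete _)).inter
        ((continuous_apply m2).isOpen_preimage _ (isOpen_discrete _))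
    have hxmem : x ∈ {z : M → A | z m1 = x m1 ∧ z m2 = x m2} := ⟨rfl, rfl⟩
    obtain ⟨y, ⟨hy1, hy2⟩, hyper⟩ :=
      mem_closure_iff.mp (hdense x) _ hopen hxmem
    have hy1a : y m1 = a := by simp [hx] at hy1; exact hy1
    have hy2b : y m2 = b := by simp [hx, hne.symm] at hy2; exact hy2
    set O : Set (M → A) := Set.range fun m : M => shift m y with hO
    have hOfin : O.Finite := hyper
    haveI : Finite O := hOfin
    have hclosed : ∀ m : M, ∀ z ∈ O, shift m z ∈ O := by
      rintro m _ ⟨m', rfl⟩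
      refine ⟨m * m', ?_⟩
      funext k
      show y (k * (m * m')) = y (k * m * m')
      rw [mul_assoc]
    refine ⟨Function.End O, inferInstance, inferInstanceAs (Finite (↑O → ↑O)),
      fun m => fun z => ⟨shift m z.1, hclosed m z.1 z.2⟩, ?_, ?_, ?_⟩
    · funext z
      refine Subtype.ext ?_
      funext k
      show (z : M → A) (k * 1) = ((1 : Function.End O) z : M → A) k
      rw [mul_one]
      rfl
    · intro p q
      funext z
      refine Subtype.ext ?_
      funext k
      show (z : M → A) (k * (p * q)) = (z : M → A) (k * p * q)
      rw [mul_assoc]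
    · intro hcontr
      have hyO : y ∈ O := ⟨1, by funext k; show y (k * 1) = y k; rw [mul_one]⟩
      have h2 := congrFun hcontr ⟨y, hyO⟩
      rw [Subtype.ext_iff] at h2
      have h3 := congrFun h2 1
      have h4 : y (1 * m1) = y (1 * m2) := h3
      rw [one_mul, one_mul, hy1a, hy2b] at h4
      exact hab h4
end
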